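/- Let b : [0,∞) → (0,∞) be increasing with b(t+1) ≤ C₁ b(t) for all t ≥ 0 (C₁ ≥ 1) and b(t) ≥ (log t)^ε̃/t for t ≥ T₁ > e, ε̃ > 0. Then for every k > 0 there is a constant c > 1 such that whenever x, y ≥ 0 satisfy b(y)|x−y| ≤ k, one has b(x)/c ≤ b(y) ≤ c b(x). -/

import Mathlib

open Real Set

/-- One-dimensional Lemma 2.3 (increasing case): a positive increasing `b` with
`b(t+1) ≤ C₁ b(t)` and `b(t) ≥ (log t)^ε̃/t` for `t ≥ T₁ > e` is comparable at points
`x, y` with `b(y)|x−y| ≤ k`. -/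
theorem b_comparable_at_scale_increasing
    (b : ℝ → ℝ) (εt T₁ C₁ : ℝ)
    (hεt : 0 < εt) (hT₁ : Real.exp 1 < T₁) (hC₁ : 1 ≤ C₁)
    (hbpos : ∀ t ≥ (0:ℝ), 0 < b t)
    (hbinc : MonotoneOn b (Set.Ici (0:ℝ)))
    (hshift : ∀ t ≥ (0:ℝ), b (t + 1) ≤ C₁ * b t)
    (hlow : ∀ t ≥ T₁, (Real.log t) ^ εt / t ≤ b t) :
    ∀ k > (0:ℝ), ∃ c > (1:ℝ), ∀ x ≥ (0:ℝ), ∀ y ≥ (0:ℝ),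
      b y * |x - y| ≤ k → b x / c ≤ b y ∧ b y ≤ c * b x := by
  intro k hk
  have hb0 : 0 < b 0 := hbpos 0 le_rfl
  set n : ℕ := ⌈k / b 0⌉₊ with hn
  have hC₁pos : (0:ℝ) < C₁ := lt_of_lt_of_le one_pos hC₁
  have hCn1 : (1:ℝ) ≤ C₁ ^ n := one_le_pow₀ hC₁
  have key : ∀ t ≥ (0:ℝ), ∀ m : ℕ, b (t + m) ≤ C₁ ^ m * b t := by
    intro t ht m
    induction m with
    | zero => simp
    | succ m ih =>
      have h1 : b (t + m + 1) ≤ C₁ * b (t + m) := hshift (t + m) (by positivity)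
      calc b (t + ((m+1 : ℕ) : ℝ)) = b (t + m + 1) := by push_cast; ring_nf
        _ ≤ C₁ * b (t + m) := h1
        _ ≤ C₁ * (C₁ ^ m * b t) := by
            exact mul_le_mul_of_nonneg_left ih hC₁pos.le
        _ = C₁ ^ (m + 1) * b t := by ring
  refine ⟨C₁ ^ n + 1, by linarith, ?_⟩
  intro x hx y hy hxy
  have hbx : 0 < b x := hbpos x hx
  have hby : 0 < b y := hbpos y hy
  have hb0y : b 0 ≤ b y := hbinc (mem_Ici.mpr le_rfl) hy hy
  have hdist : |x - y| ≤ (n : ℝ) := by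
    have h1 : b 0 * |x - y| ≤ b y * |x - y| :=
      mul_le_mul_of_nonneg_right hb0y (abs_nonneg _)
    have h2 : |x - y| ≤ k / b 0 := by
      rw [le_div_iff₀ hb0]
      nlinarith [abs_nonneg (x - y)]
    exact h2.trans (Nat.le_ceil _)
  rcases le_total x y with hle | hle
  · have hyx : y ≤ x + n := by
      have : y - x ≤ |x - y| := by rw [abs_sub_comm]; exact le_abs_self _
      linarith
    have h1 : b y ≤ b (x + n) := hbinc hy (mem_Ici.mpr (by positivity)) hyx
    have h2 : b (x + n) ≤ C₁ ^ n * b x := key x hx n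
    constructor
    · have : b x / (C₁ ^ n + 1) ≤ b x := by
        apply div_le_self hbx.le; linarith
      exact this.trans (hbinc hx hy hle)
    · nlinarith
  · have hxy' : x ≤ y + n := by
      have : x - y ≤ |x - y| := le_abs_self _
      linarith
    have h1 : b x ≤ b (y + n) := hbinc hx (mem_Ici.mpr (by positivity)) hxy'
    have h2 : b (y + n) ≤ C₁ ^ n * b y := key y hy n
    constructor
    · rw [div_le_iff₀ (by linarith : (0:ℝ) < C₁ ^ n + 1)]
      nlinarith
    · have := hbinc hy hx hle
      nlinarith
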